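/- Torsor translation for edge ordering maps: let β, β' be edge ordering maps on a finite connected graph G with data e_1 < e_2 < ... < e_h and ē_1 < e_2 < ... < e_h respectively, where ē_1 is e_1 with reversed orientation and e_1 = (v,u). Then for every spanning tree T, the divisors satisfy β(T) − β'(T) ≡ (u) − (v) in Pic^0(G); explicitly, if e_1 ∉ T the difference is exactly (u) − (v), and if e_1 ∈ T the difference is (u) − (v) − Δχ_{U'}, where [V', U'] is the fundamental cut of e_1 in T with v ∈ V', u ∈ U', Δ is the graph Laplacian, and χ_{U'} the indicator vector of U'. -/

import Mathlib

open scoped Classical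
set_option linter.unusedSectionVars false
set_option maxHeartbeats 1000000

variable {V E : Type} [Fintype V] [Fintype E] [DecidableEq V] [DecidableEq E]

/-- Reachability between vertices using (undirected) edges from the set `A`. -/
def ReachIn (ι : E → V × V) (A : Set E) (a b : V) : Prop :=
  Relation.ReflTransGen (fun x y => ∃ e ∈ A, ι e = (x, y) ∨ ι e = (y, x)) a b

/-- The graph with edge set `A` (on all of `V`) is connected. -/
def Conn (ι : E → V × V) (A : Set E) : Prop := ∀ a b : V, ReachIn ι A a b

/-- `C : E → ℤ` is the signed indicator vector of a (simple, directed) cycle: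
entries in `{-1,0,1}`, nonempty support, zero boundary, every vertex meets
0 or 2 support edges, and the support is connected. -/
def IsCycleVec (ι : E → V × V) (C : E → ℤ) : Prop :=
  (∀ e, C e = 0 ∨ C e = 1 ∨ C e = -1) ∧
  (∃ e, C e ≠ 0) ∧
  (∀ v : V, ∑ e : E, C e *
      ((if (ι e).2 = v then 1 else 0) - (if (ι e).1 = v then 1 else 0)) = 0) ∧
  (∀ v : V,
    (Finset.univ.filter fun e => C e ≠ 0 ∧ ((ι e).1 = v ∨ (ι e).2 = v)).card = 0 ∨
    (Finset.univ.filter fun e => C e ≠ 0 ∧ ((ι e).1 = v ∨ (ι e).2 = v)).card = 2) ∧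
  (∀ a b : V, (∃ e, C e ≠ 0 ∧ ((ι e).1 = a ∨ (ι e).2 = a)) →
    (∃ e, C e ≠ 0 ∧ ((ι e).1 = b ∨ (ι e).2 = b)) →
    ReachIn ι {e | C e ≠ 0} a b)

/-- The graph Laplacian applied to an integer vector `x : V → ℤ`. -/
def lap (ι : E → V × V) (x : V → ℤ) (w : V) : ℤ :=
  ∑ e : E, ((if (ι e).1 = w then x (ι e).1 - x (ι e).2 else 0) +
            (if (ι e).2 = w then x (ι e).2 - x (ι e).1 else 0))


theorem ReachIn.symm {ι : E → V × V} {A : Set E} {a b : V} (h : ReachIn ι A a b) :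
    ReachIn ι A b a := by
  have hsym : Symmetric (fun x y => ∃ e ∈ A, ι e = (x, y) ∨ ι e = (y, x)) := by
    rintro x y ⟨e, he, h⟩; exact ⟨e, he, h.symm⟩
  haveI : Std.Symm (fun x y => ∃ e ∈ A, ι e = (x, y) ∨ ι e = (y, x)) := ⟨hsym⟩
  exact (Relation.ReflTransGen.symmetric (r := fun x y => ∃ e ∈ A, ι e = (x, y) ∨ ι e = (y, x))).symm _ _ h

theorem ReachIn.trans {ι : E → V × V} {A : Set E} {a b c : V} (h : ReachIn ι A a b)
    (h' : ReachIn ι A b c) : ReachIn ι A a c := Relation.ReflTransGen.trans h h'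

def IsWalk (ι : E → V × V) (A : Set E) (a b : V) (n : ℕ) (p : ℕ → V) (g : ℕ → E) : Prop :=
  p 0 = a ∧ p n = b ∧ ∀ i < n, g i ∈ A ∧ (ι (g i) = (p i, p (i+1)) ∨ ι (g i) = (p (i+1), p i))

theorem reach_to_walk {ι : E → V × V} {A : Set E} {a b : V} (e₀ : E)
    (h : ReachIn ι A a b) : ∃ n p g, IsWalk ι A a b n p g := by
  induction h with
  | refl => exact ⟨0, fun _ => a, fun _ => e₀, rfl, rfl, fun i hi => absurd hi (Nat.not_lt_zero i)⟩
  | @tail c c' _ hstep ih =>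
    obtain ⟨n, p, g, hp0, hpn, hsteps⟩ := ih
    obtain ⟨e, heA, hor⟩ := hstep
    refine ⟨n+1, fun i => if i ≤ n then p i else c', fun i => if i < n then g i else e, ?_, ?_, ?_⟩
    · simp [Nat.zero_le]; exact hp0
    · simp
    · intro i hi
      rcases Nat.lt_or_ge i n with hilt | hige
      · have h1 : i ≤ n := le_of_lt hilt
        have h2 : i + 1 ≤ n := hilt
        simpa [hilt, h1, h2] using hsteps i hilt
      · have hieq : i = n := le_antisymm (Nat.lt_succ_iff.mp hi) hige
        subst hieq
        simp only [lt_irrefl, if_neg (lt_irrefl i), le_refl, if_pos, Nat.not_le.mpr (Nat.lt_succ_self i), if_neg]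
        constructor
        · exact heA
        · rw [hpn]
          simpa using hor

theorem reach_to_injwalk {ι : E → V × V} {A : Set E} {a b : V} (e₀ : E)
    (h : ReachIn ι A a b) : ∃ n p g, IsWalk ι A a b n p g ∧
      ∀ i ≤ n, ∀ j ≤ n, p i = p j → i = j := by
  have hex : ∃ n, ∃ p, ∃ g, IsWalk ι A a b n p g := by
    obtain ⟨n, p, g, hw⟩ := reach_to_walk e₀ h
    exact ⟨n, p, g, hw⟩
  set m := Nat.find hex with hm
  obtain ⟨p, g, hw⟩ := Nat.find_spec hex
  refine ⟨m, p, g, hw, ?_⟩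
  have key : ∀ i j, i < j → j ≤ m → p i = p j → False := by
    intro i j hij hjm hpij
    set d := j - i with hd
    have hd1 : 1 ≤ d := Nat.le_sub_of_add_le (by omega)
    have hid : i + d = j := by omega
    have hdm : d ≤ m := by omega
    have hdm' : d ≤ m := by omega
    set n' := m - d with hn'
    have hn'd : n' + d = m := by omega
    have hin' : i ≤ n' := by omega
    obtain ⟨hp0, hpm, hsteps⟩ := hw
    set p' : ℕ → V := fun k => if k ≤ i then p k else p (k + d) with hp'
    set g' : ℕ → E := fun k => if k < i then g k else g (k + d) with hg'
    have hkey : ∀ k, i ≤ k → p' k = p (k + d) := by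
      intro k hk
      rcases eq_or_lt_of_le hk with heq | hlt
      · subst heq; simp [hp', hid, ← hpij]
      · simp [hp', Nat.not_le.mpr hlt]
    have hwalk : IsWalk ι A a b n' p' g' := by
      refine ⟨?_, ?_, ?_⟩
      · simp [hp', Nat.zero_le]; exact hp0
      · rw [hkey n' hin', hn'd]; exact hpm
      · intro k hk
        rcases Nat.lt_or_ge k i with hki | hki
        · have h1 : k ≤ i := le_of_lt hki
          have h2 : k + 1 ≤ i := hki
          have := hsteps k (by omega)
          simpa [hp', hg', hki, h1, h2] using this
        · have hg'k : g' k = g (k + d) := by simp [hg', Nat.not_lt.mpr hki]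
          have hp'k : p' k = p (k + d) := hkey k hki
          have hp'k1 : p' (k+1) = p (k + 1 + d) := hkey (k+1) (by omega)
          have := hsteps (k + d) (by omega)
          rw [hg'k, hp'k, hp'k1]
          have harith : k + d + 1 = k + 1 + d := by omega
          rw [← harith]
          exact this
    have hlt : n' < m := by omega
    exact Nat.find_min hex hlt ⟨p', g', hwalk⟩
  intro i hi j hj hpij
  by_contra hne
  rcases Nat.lt_or_ge i j with h1 | h1
  · exact key i j h1 hj hpij
  · have : j < i := by omega
    exact key j i this hi hpij.symm

theorem tree_sep {ι : E → V × V} {T : Finset E} {t : E} (ht : t ∈ T)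
    (hnl : (ι t).1 ≠ (ι t).2)
    (hTacyc : ∀ C : E → ℤ, IsCycleVec ι C → ∃ e, C e ≠ 0 ∧ e ∉ T) :
    ¬ ReachIn ι {g | g ∈ T ∧ g ≠ t} ((ι t).2) ((ι t).1) := by
  intro hr
  obtain ⟨n, p, g, ⟨hp0, hpn, hsteps⟩, hpinj⟩ := reach_to_injwalk t hr
  have hgT : ∀ i < n, g i ∈ T := fun i hi => (hsteps i hi).1.1
  have hgt : ∀ i < n, g i ≠ t := fun i hi => (hsteps i hi).1.2
  have hor : ∀ i < n, ι (g i) = (p i, p (i+1)) ∨ ι (g i) = (p (i+1), p i) :=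
    fun i hi => (hsteps i hi).2
  have hn1 : 1 ≤ n := by
    by_contra hn
    have : n = 0 := by omega
    exact hnl (by rw [← hp0, ← hpn, this])
  have hpne : ∀ i < n, p i ≠ p (i+1) := by
    intro i hi heq
    have := hpinj i (by omega) (i+1) (by omega) heq
    omega
  have g_inj : ∀ i < n, ∀ j < n, g i = g j → i = j := by
    intro i hi j hj hgij
    rcases hor i hi with h1 | h1 <;> rcases hor j hj with h2 | h2 <;>
      rw [hgij, h2, Prod.mk.injEq] at h1
    · have e1 := hpinj j (by omega) i (by omega) h1.1
      omega
    · have e1 := hpinj (j+1) (by omega) i (by omega) h1.1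
      have e2 := hpinj j (by omega) (i+1) (by omega) h1.2
      omega
    · have e1 := hpinj j (by omega) (i+1) (by omega) h1.1
      have e2 := hpinj (j+1) (by omega) i (by omega) h1.2
      omega
    · have e1 := hpinj (j+1) (by omega) (i+1) (by omega) h1.1
      omega
  set σ : ℕ → ℤ := fun i => if ι (g i) = (p i, p (i+1)) then 1 else -1 with hσdef
  have hσ : ∀ i < n, (σ i = 1 ∧ ι (g i) = (p i, p (i+1))) ∨
      (σ i = -1 ∧ ι (g i) = (p (i+1), p i)) := by
    intro i hi
    by_cases hc : ι (g i) = (p i, p (i+1))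
    · exact Or.inl ⟨by simp [hσdef, hc], hc⟩
    · refine Or.inr ⟨by simp [hσdef, hc], ?_⟩
      rcases hor i hi with h | h
      · exact absurd h hc
      · exact h
  have hσne : ∀ i < n, σ i ≠ 0 := by
    intro i hi; rcases hσ i hi with ⟨h, _⟩ | ⟨h, _⟩ <;> rw [h] <;> norm_num
  set C : E → ℤ := fun e => (if e = t then 1 else 0) +
      ∑ i ∈ Finset.range n, (if g i = e then σ i else 0) with hCdef
  have hCt : C t = 1 := by
    have hz : ∑ i ∈ Finset.range n, (if g i = t then σ i else 0) = 0 := by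
      refine Finset.sum_eq_zero (fun i hi => ?_)
      rw [if_neg (hgt i (Finset.mem_range.mp hi))]
    show (if t = t then (1:ℤ) else 0) + ∑ i ∈ Finset.range n, (if g i = t then σ i else 0) = 1
    rw [hz, if_pos rfl]; norm_num
  have hCg : ∀ k < n, C (g k) = σ k := by
    intro k hk
    simp only [hCdef, if_neg (hgt k hk)]
    rw [Finset.sum_eq_single_of_mem k (Finset.mem_range.mpr hk)]
    · rw [if_pos rfl]; ring
    · intro b hb hbk
      rw [if_neg (fun hc => hbk (g_inj b (Finset.mem_range.mp hb) k hk hc))]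
  have hC0 : ∀ e, e ≠ t → (∀ i < n, g i ≠ e) → C e = 0 := by
    intro e het hge
    simp only [hCdef, if_neg het]
    rw [Finset.sum_eq_zero (fun i hi => if_neg (hge i (Finset.mem_range.mp hi)))]
    ring
  have hsupp : ∀ e, C e ≠ 0 → e = t ∨ ∃ i, i < n ∧ g i = e := by
    intro e he
    by_contra hcon
    push_neg at hcon
    exact he (hC0 e hcon.1 (fun i hi => hcon.2 i hi))
  have hCcyc : IsCycleVec ι C := by
    refine ⟨?_, ⟨t, by rw [hCt]; norm_num⟩, ?_, ?_, ?_⟩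
    · -- entries
      intro e
      by_cases het : e = t
      · subst het; rw [hCt]; tauto
      · by_cases hge : ∃ i, i < n ∧ g i = e
        · obtain ⟨i, hi, hgi⟩ := hge
          rw [← hgi, hCg i hi]
          rcases hσ i hi with ⟨h, _⟩ | ⟨h, _⟩ <;> rw [h] <;> tauto
        · push_neg at hge
          rw [hC0 e het (fun i hi => hge i hi)]; tauto
    · -- boundary
      intro v
      have expand : ∀ e : E, C e *
          ((if (ι e).2 = v then 1 else 0) - (if (ι e).1 = v then 1 else 0))
          = (if e = t then ((if (ι t).2 = v then (1:ℤ) else 0) - (if (ι t).1 = v then 1 else 0)) else 0)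
            + ∑ i ∈ Finset.range n, (if g i = e then σ i *
              ((if (ι (g i)).2 = v then 1 else 0) - (if (ι (g i)).1 = v then 1 else 0)) else 0) := by
        intro e
        simp only [hCdef]
        rw [add_mul, Finset.sum_mul]
        congr 1
        · by_cases het : e = t <;> simp [het]
        · refine Finset.sum_congr rfl (fun i _ => ?_)
          by_cases hgi : g i = e
          · rw [if_pos hgi, if_pos hgi, hgi]
          · simp [hgi]
      rw [Finset.sum_congr rfl (fun e _ => expand e), Finset.sum_add_distrib]
      have S1 : ∑ e : E, (if e = t then ((if (ι t).2 = v then (1:ℤ) else 0) - (if (ι t).1 = v then 1 else 0)) else 0)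
          = (if (ι t).2 = v then (1:ℤ) else 0) - (if (ι t).1 = v then 1 else 0) := by
        simp
      have S2 : ∑ e : E, ∑ i ∈ Finset.range n, (if g i = e then σ i *
              ((if (ι (g i)).2 = v then (1:ℤ) else 0) - (if (ι (g i)).1 = v then 1 else 0)) else 0)
          = ∑ i ∈ Finset.range n, ((if p (i+1) = v then (1:ℤ) else 0) - (if p i = v then 1 else 0)) := by
        rw [Finset.sum_comm]
        refine Finset.sum_congr rfl (fun i hi => ?_)
        rw [Finset.sum_ite_eq Finset.univ (g i) _]
        rw [if_pos (Finset.mem_univ _)]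
        rcases hσ i (Finset.mem_range.mp hi) with ⟨h1, h2⟩ | ⟨h1, h2⟩ <;> rw [h1, h2] <;> simp <;> ring
      rw [S1, S2, Finset.sum_range_sub (f := fun i => if p i = v then (1:ℤ) else 0)]
      rw [← hp0, ← hpn]
      ring
    · -- degree
      intro v
      by_cases hv : ∃ k, k ≤ n ∧ p k = v
      · right
        obtain ⟨k, hk, hpk⟩ := hv
        set a : E := if k = 0 then t else g (k-1) with hadef
        set b : E := if k = n then t else g k with hbdef
        have hne : a ≠ b := by
          by_cases hk0 : k = 0
          · have hkn : k ≠ n := by omega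
            simp only [hadef, hbdef, if_pos hk0, if_neg hkn]
            exact fun hc => (hgt k (by omega)) hc.symm
          · by_cases hkn : k = n
            · simp only [hadef, hbdef, if_neg hk0, if_pos hkn]
              exact hgt (k-1) (by omega)
            · simp only [hadef, hbdef, if_neg hk0, if_neg hkn]
              intro hc
              have := g_inj (k-1) (by omega) k (by omega) hc
              omega
        have hmema : C a ≠ 0 ∧ ((ι a).1 = v ∨ (ι a).2 = v) := by
          by_cases hk0 : k = 0
          · simp only [hadef, if_pos hk0]
            refine ⟨by rw [hCt]; norm_num, Or.inr ?_⟩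
            rw [← hp0, ← hpk, hk0]
          · simp only [hadef, if_neg hk0]
            have hklt : k - 1 < n := by omega
            refine ⟨by rw [hCg _ hklt]; exact hσne _ hklt, ?_⟩
            rcases hσ (k-1) hklt with ⟨_, h2⟩ | ⟨_, h2⟩ <;> rw [h2] <;>
              [right; left] <;> simp <;> rw [← hpk] <;> congr 1 <;> omega
        have hmemb : C b ≠ 0 ∧ ((ι b).1 = v ∨ (ι b).2 = v) := by
          by_cases hkn : k = n
          · simp only [hbdef, if_pos hkn]
            refine ⟨by rw [hCt]; norm_num, Or.inl ?_⟩
            rw [← hpn, ← hpk, hkn]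
          · simp only [hbdef, if_neg hkn]
            have hklt : k < n := by omega
            refine ⟨by rw [hCg _ hklt]; exact hσne _ hklt, ?_⟩
            rcases hσ k hklt with ⟨_, h2⟩ | ⟨_, h2⟩ <;> rw [h2] <;>
              [left; right] <;> simp [hpk]
        have hfilt : (Finset.univ.filter fun e => C e ≠ 0 ∧ ((ι e).1 = v ∨ (ι e).2 = v))
            = {a, b} := by
          ext e
          simp only [Finset.mem_filter, Finset.mem_univ, true_and, Finset.mem_insert,
            Finset.mem_singleton]
          constructor
          · rintro ⟨hce, hinc⟩
            rcases hsupp e hce with het | ⟨i, hi, hgi⟩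
            · subst het
              have hnv : p n = v ∨ p 0 = v := by
                rcases hinc with h | h
                · left; rw [hpn]; exact h
                · right; rw [hp0]; exact h
              rcases hnv with h | h
              · have hkn : k = n := hpinj k (by omega) n (by omega) (by rw [hpk, h])
                right; simp [hbdef, hkn]
              · have hk0 : k = 0 := hpinj k (by omega) 0 (by omega) (by rw [hpk, h])
                left; simp [hadef, hk0]
            · subst hgi
              have hiv : p i = v ∨ p (i+1) = v := by
                rcases hor i hi with h2 | h2 <;> rw [h2] at hinc <;> simp at hinc <;> tauto
              rcases hiv with h | h
              · have hik : i = k := hpinj i (by omega) k (by omega) (by rw [h, hpk])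
                right
                have hkn : k ≠ n := by omega
                simp only [hbdef, if_neg hkn]
                rw [hik]
              · have hik : i + 1 = k := hpinj (i+1) (by omega) k (by omega) (by rw [h, hpk])
                left
                have hk0 : k ≠ 0 := by omega
                simp only [hadef, if_neg hk0]
                congr 1
                omega
          · rintro (he | he) <;> subst he
            · exact hmema
            · exact hmemb
        rw [hfilt]
        exact Finset.card_pair hne
      · left
        push_neg at hv
        refine Finset.card_eq_zero.mpr (Finset.filter_eq_empty_iff.mpr ?_)
        intro e _ hp
        obtain ⟨hce, hinc⟩ := hp
        rcases hsupp e hce with het | ⟨i, hi, hgi⟩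
        · subst het
          rcases hinc with hh | hh
          · exact hv n (le_refl n) (by rw [hpn]; exact hh)
          · exact hv 0 (by omega) (by rw [hp0]; exact hh)
        · subst hgi
          have hiv : p i = v ∨ p (i+1) = v := by
            rcases hor i hi with h2 | h2 <;> rw [h2] at hinc <;> simp at hinc <;> tauto
          rcases hiv with hh | hh
          · exact hv i (by omega) hh
          · exact hv (i+1) (by omega) hh
    · -- connectivity
      intro x y hx hy
      have htouch : ∀ z, (∃ e, C e ≠ 0 ∧ ((ι e).1 = z ∨ (ι e).2 = z)) →
          ∃ k, k ≤ n ∧ p k = z := by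
        rintro z ⟨e, hce, hinc⟩
        rcases hsupp e hce with het | ⟨i, hi, hgi⟩
        · subst het
          rcases hinc with hh | hh
          · exact ⟨n, le_refl n, by rw [hpn]; exact hh⟩
          · exact ⟨0, by omega, by rw [hp0]; exact hh⟩
        · subst hgi
          have hiv : p i = z ∨ p (i+1) = z := by
            rcases hor i hi with h2 | h2 <;> rw [h2] at hinc <;> simp at hinc <;> tauto
          rcases hiv with hh | hh
          · exact ⟨i, by omega, hh⟩
          · exact ⟨i+1, by omega, hh⟩
      have hchain : ∀ k, k ≤ n → ReachIn ι {e | C e ≠ 0} (p 0) (p k) := by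
        intro k
        induction k with
        | zero => intro _; exact Relation.ReflTransGen.refl
        | succ k ih =>
          intro hk
          refine Relation.ReflTransGen.tail (ih (by omega)) ?_
          refine ⟨g k, ?_, hor k (by omega)⟩
          show C (g k) ≠ 0
          rw [hCg k (by omega)]
          exact hσne k (by omega)
      obtain ⟨k1, hk1, hpk1⟩ := htouch x hx
      obtain ⟨k2, hk2, hpk2⟩ := htouch y hy
      have r1 := hchain k1 hk1
      have r2 := hchain k2 hk2
      rw [hpk1] at r1; rw [hpk2] at r2
      exact ReachIn.trans (ReachIn.symm r1) r2
  obtain ⟨e, hce, heT⟩ := hTacyc C hCcyc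
  rcases hsupp e hce with het | ⟨i, hi, hgi⟩
  · exact heT (het ▸ ht)
  · exact heT (hgi ▸ hgT i hi)

theorem pairing (ι : E → V × V) (C : E → ℤ)
    (hb : ∀ v : V, ∑ e : E, C e *
      ((if (ι e).2 = v then 1 else 0) - (if (ι e).1 = v then 1 else 0)) = 0)
    (x : V → ℤ) : ∑ e : E, C e * (x (ι e).2 - x (ι e).1) = 0 := by
  have key : ∀ e : E, C e * (x (ι e).2 - x (ι e).1)
      = ∑ v : V, x v * (C e *
        ((if (ι e).2 = v then 1 else 0) - (if (ι e).1 = v then 1 else 0))) := by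
    intro e
    have h2 : ∑ v : V, (if (ι e).2 = v then x v else 0) = x (ι e).2 := by simp
    have h1 : ∑ v : V, (if (ι e).1 = v then x v else 0) = x (ι e).1 := by simp
    calc C e * (x (ι e).2 - x (ι e).1)
        = C e * ((∑ v : V, (if (ι e).2 = v then x v else 0))
            - (∑ v : V, (if (ι e).1 = v then x v else 0))) := by rw [h1, h2]
      _ = ∑ v : V, x v * (C e *
          ((if (ι e).2 = v then 1 else 0) - (if (ι e).1 = v then 1 else 0))) := by
          rw [mul_sub, Finset.mul_sum, Finset.mul_sum, ← Finset.sum_sub_distrib]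
          refine Finset.sum_congr rfl (fun v _ => ?_)
          by_cases hv2 : (ι e).2 = v <;> by_cases hv1 : (ι e).1 = v <;>
            simp [hv1, hv2] <;> ring
  calc ∑ e : E, C e * (x (ι e).2 - x (ι e).1)
      = ∑ e : E, ∑ v : V, x v * (C e *
          ((if (ι e).2 = v then 1 else 0) - (if (ι e).1 = v then 1 else 0))) :=
        Finset.sum_congr rfl (fun e _ => key e)
    _ = ∑ v : V, x v * ∑ e : E, C e *
          ((if (ι e).2 = v then 1 else 0) - (if (ι e).1 = v then 1 else 0)) := by
        rw [Finset.sum_comm]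
        exact Finset.sum_congr rfl (fun v _ => (Finset.mul_sum _ _ _).symm)
    _ = 0 := by simp [hb]

noncomputable def chi (ι : E → V × V) (T : Finset E) (t : E) (z : V) : ℤ :=
  if ReachIn ι {g | g ∈ T ∧ g ≠ t} ((ι t).2) z then 1 else 0

theorem chi_head (ι : E → V × V) (T : Finset E) (t : E) :
    chi ι T t ((ι t).2) = 1 := if_pos Relation.ReflTransGen.refl

theorem chi_tail {ι : E → V × V} {T : Finset E} {t : E} (ht : t ∈ T)
    (hnl : (ι t).1 ≠ (ι t).2)
    (hTacyc : ∀ C : E → ℤ, IsCycleVec ι C → ∃ e, C e ≠ 0 ∧ e ∉ T) :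
    chi ι T t ((ι t).1) = 0 := if_neg (tree_sep ht hnl hTacyc)

theorem chi_edge {ι : E → V × V} {T : Finset E} {t e : E} (he : e ∈ T) (het : e ≠ t) :
    chi ι T t ((ι e).1) = chi ι T t ((ι e).2) := by
  have hiff : ReachIn ι {g | g ∈ T ∧ g ≠ t} ((ι t).2) ((ι e).1) ↔
      ReachIn ι {g | g ∈ T ∧ g ≠ t} ((ι t).2) ((ι e).2) := by
    constructor
    · intro hh
      exact Relation.ReflTransGen.tail hh ⟨e, ⟨he, het⟩, Or.inl Prod.mk.eta.symm⟩
    · intro hh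
      exact Relation.ReflTransGen.tail hh ⟨e, ⟨he, het⟩, Or.inr Prod.mk.eta.symm⟩
  simp only [chi]
  by_cases hc : ReachIn ι {g | g ∈ T ∧ g ≠ t} ((ι t).2) ((ι e).1)
  · rw [if_pos hc, if_pos (hiff.mp hc)]
  · rw [if_neg hc, if_neg (fun hc' => hc (hiff.mpr hc'))]

theorem chi01 (ι : E → V × V) (T : Finset E) (t : E) (z : V) :
    chi ι T t z = 0 ∨ chi ι T t z = 1 := by
  unfold chi; by_cases hc : ReachIn ι {g | g ∈ T ∧ g ≠ t} ((ι t).2) z <;> simp [hc]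

theorem cut_eq {ι : E → V × V} {T : Finset E} {t f : E} (ht : t ∈ T) (hf : f ∉ T)
    (hnl : (ι t).1 ≠ (ι t).2)
    (hTacyc : ∀ C : E → ℤ, IsCycleVec ι C → ∃ e, C e ≠ 0 ∧ e ∉ T)
    (C : E → ℤ)
    (hb : ∀ v : V, ∑ e : E, C e *
      ((if (ι e).2 = v then 1 else 0) - (if (ι e).1 = v then 1 else 0)) = 0)
    (hsupp : ∀ e, C e ≠ 0 → e ∈ T ∨ e = f) :
    C t = - (C f * (chi ι T t ((ι f).2) - chi ι T t ((ι f).1))) := by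
  have hp := pairing ι C hb (chi ι T t)
  have htf : t ≠ f := fun h => hf (h ▸ ht)
  have hterm : ∀ e : E, C e * (chi ι T t (ι e).2 - chi ι T t (ι e).1)
      = (if e = t then C t * (chi ι T t (ι t).2 - chi ι T t (ι t).1) else 0)
        + (if e = f then C f * (chi ι T t (ι f).2 - chi ι T t (ι f).1) else 0) := by
    intro e
    by_cases het : e = t
    · subst het; rw [if_pos rfl, if_neg htf]; ring
    · by_cases hef : e = f
      · subst hef; rw [if_neg het, if_pos rfl]; ring
      · rw [if_neg het, if_neg hef]
        by_cases hce : C e = 0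
        · rw [hce]; ring
        · have heT : e ∈ T := (hsupp e hce).resolve_right hef
          rw [chi_edge heT het]; ring
  rw [Finset.sum_congr rfl (fun e _ => hterm e), Finset.sum_add_distrib] at hp
  rw [Finset.sum_ite_eq' Finset.univ t, Finset.sum_ite_eq' Finset.univ f] at hp
  rw [if_pos (Finset.mem_univ t), if_pos (Finset.mem_univ f)] at hp
  rw [chi_head, chi_tail ht hnl hTacyc] at hp
  linarith

theorem no_loop_in_supp {ι : E → V × V} {T : Finset E} {f : E}
    (hTacyc : ∀ C : E → ℤ, IsCycleVec ι C → ∃ e, C e ≠ 0 ∧ e ∉ T)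
    (hfnl : (ι f).1 ≠ (ι f).2)
    (C : E → ℤ) (hC : IsCycleVec ι C) (hsupp : ∀ e, C e ≠ 0 → e ∈ T ∨ e = f)
    (l : E) (hl : (ι l).1 = (ι l).2) : C l = 0 := by
  by_contra hCl
  obtain ⟨hent, _, hb, hdeg, _⟩ := hC
  set a := (ι l).1 with ha
  have hlf : l ∈ Finset.univ.filter (fun e => C e ≠ 0 ∧ ((ι e).1 = a ∨ (ι e).2 = a)) := by
    simp [hCl, ha]
  rcases hdeg a with h0 | h2
  · rw [Finset.card_eq_zero] at h0
    rw [h0] at hlf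
    simp at hlf
  · obtain ⟨x, y, hxy, hset⟩ := Finset.card_eq_two.mp h2
    have hlxy : l = x ∨ l = y := by
      rw [hset] at hlf; simpa using hlf
    obtain ⟨e, hel, hemem⟩ : ∃ e, e ≠ l ∧ e ∈ Finset.univ.filter
        (fun e => C e ≠ 0 ∧ ((ι e).1 = a ∨ (ι e).2 = a)) := by
      rcases hlxy with h | h
      · refine ⟨y, ?_, by rw [hset]; simp⟩
        subst h; exact fun hc => hxy hc.symm
      · refine ⟨x, ?_, by rw [hset]; simp⟩
        subst h; exact hxy
    have hCe : C e ≠ 0 := (Finset.mem_filter.mp hemem).2.1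
    have hinc : (ι e).1 = a ∨ (ι e).2 = a := (Finset.mem_filter.mp hemem).2.2
    -- boundary at a forces e to be a loop at a
    have hba := hb a
    rw [Finset.sum_eq_single e] at hba
    · -- others zero
      have hψ : (if (ι e).2 = a then (1:ℤ) else 0) - (if (ι e).1 = a then 1 else 0) = 0 := by
        rcases mul_eq_zero.mp hba with hcc | hcc
        · exact absurd hcc hCe
        · exact hcc
      have hloopE : (ι e).1 = a ∧ (ι e).2 = a := by
        rcases hinc with h | h
        · rw [if_pos h] at hψ
          refine ⟨h, ?_⟩
          by_contra hc
          rw [if_neg hc] at hψ; norm_num at hψ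
        · rw [if_pos h] at hψ
          refine ⟨?_, h⟩
          by_contra hc
          rw [if_neg hc] at hψ; norm_num at hψ
      have hlT : l ∈ T := by
        rcases hsupp l hCl with h | h
        · exact h
        · exact absurd (h ▸ hl) hfnl
      have heT : e ∈ T := by
        rcases hsupp e hCe with h | h
        · exact h
        · exfalso; apply hfnl; rw [← h, hloopE.1, hloopE.2]
      -- build the two-loop cycle vector
      set C0 : E → ℤ := fun e' => if e' = l then 1 else if e' = e then 1 else 0 with hC0
      have hC0l : C0 l = 1 := by simp [hC0]
      have hC0e : C0 e = 1 := by simp [hC0, hel]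
      have hC0z : ∀ e', e' ≠ l → e' ≠ e → C0 e' = 0 := by
        intro e' h1 h2; simp [hC0, h1, h2]
      have hC0supp : ∀ e', C0 e' ≠ 0 → e' = l ∨ e' = e := by
        intro e' h
        by_contra hc
        push_neg at hc
        exact h (hC0z e' hc.1 hc.2)
      have hends : ∀ e', C0 e' ≠ 0 → (ι e').1 = a ∧ (ι e').2 = a := by
        intro e' h
        rcases hC0supp e' h with h' | h' <;> subst h'
        · exact ⟨rfl, hl.symm ▸ rfl⟩
        · exact hloopE
      have hcyc0 : IsCycleVec ι C0 := by
        refine ⟨?_, ⟨l, by rw [hC0l]; norm_num⟩, ?_, ?_, ?_⟩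
        · intro e'
          by_cases h1 : e' = l
          · subst h1; rw [hC0l]; tauto
          · by_cases h2 : e' = e
            · subst h2; rw [hC0e]; tauto
            · rw [hC0z e' h1 h2]; tauto
        · intro v
          refine Finset.sum_eq_zero (fun e' _ => ?_)
          by_cases h : C0 e' = 0
          · rw [h]; ring
          · have := hends e' h
            rw [this.1, this.2]; ring
        · intro v
          by_cases hva : v = a
          · right
            have hfe : (Finset.univ.filter fun e' => C0 e' ≠ 0 ∧ ((ι e').1 = v ∨ (ι e').2 = v))
                = {l, e} := by
              ext e'
              simp only [Finset.mem_filter, Finset.mem_univ, true_and, Finset.mem_insert,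
                Finset.mem_singleton]
              constructor
              · rintro ⟨h1, _⟩; exact hC0supp e' h1
              · rintro (h | h) <;> subst h
                · exact ⟨by rw [hC0l]; norm_num, Or.inl (by rw [← ha, hva])⟩
                · exact ⟨by rw [hC0e]; norm_num, Or.inl (by rw [hloopE.1, hva])⟩
            rw [hfe]
            exact Finset.card_pair (fun hc => hel hc.symm)
          · left
            refine Finset.card_eq_zero.mpr (Finset.filter_eq_empty_iff.mpr ?_)
            intro e' _ hp
            obtain ⟨h1, h2⟩ := hp
            have := hends e' h1
            rcases h2 with h | h
            · exact hva (by rw [← h, this.1])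
            · exact hva (by rw [← h, this.2])
        · intro x' y' hx' hy'
          have hxa : x' = a := by
            obtain ⟨e', h1, h2⟩ := hx'
            have := hends e' h1
            rcases h2 with h | h
            · rw [← h, this.1]
            · rw [← h, this.2]
          have hya : y' = a := by
            obtain ⟨e', h1, h2⟩ := hy'
            have := hends e' h1
            rcases h2 with h | h
            · rw [← h, this.1]
            · rw [← h, this.2]
          rw [hxa, hya]
          exact Relation.ReflTransGen.refl
      obtain ⟨e', hne', hnT⟩ := hTacyc C0 hcyc0
      rcases hC0supp e' hne' with h | h <;> subst h
      · exact hnT hlT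
      · exact hnT heT
    · intro b _ hbe
      by_cases hcb : C b = 0
      · rw [hcb]; ring
      · by_cases hincb : (ι b).1 = a ∨ (ι b).2 = a
        · have hbmem : b ∈ ({x, y} : Finset E) := by
            rw [← hset]; simp [hcb, hincb]
          have hemem' : e ∈ ({x, y} : Finset E) := by rw [← hset]; exact hemem
          have hlmem : l ∈ ({x, y} : Finset E) := by rw [← hset]; exact hlf
          simp only [Finset.mem_insert, Finset.mem_singleton] at hbmem hemem' hlmem
          have hbl : b = l := by
            rcases hemem' with h2 | h2
            · have hb' : b = y := by
                rcases hbmem with h | h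
                · exact absurd (h.trans h2.symm) hbe
                · exact h
              have hl' : l = y := by
                rcases hlmem with h | h
                · exact absurd (h.trans h2.symm) (fun hh => hel hh.symm)
                · exact h
              rw [hb', hl']
            · have hb' : b = x := by
                rcases hbmem with h | h
                · exact h
                · exact absurd (h.trans h2.symm) hbe
              have hl' : l = x := by
                rcases hlmem with h | h
                · exact h
                · exact absurd (h.trans h2.symm) (fun hh => hel hh.symm)
              rw [hb', hl']
          subst hbl
          rw [show (ι b).1 = (ι b).2 from hl]
          ring
        · push_neg at hincb
          rw [if_neg hincb.1, if_neg hincb.2]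
          ring
    · intro hc
      exact absurd (Finset.mem_univ e) hc

theorem prop_eq {ι : E → V × V} {T : Finset E} {f : E} (hf : f ∉ T)
    (hfnl : (ι f).1 ≠ (ι f).2)
    (hTacyc : ∀ C : E → ℤ, IsCycleVec ι C → ∃ e, C e ≠ 0 ∧ e ∉ T)
    (C C' : E → ℤ) (hC : IsCycleVec ι C) (hC' : IsCycleVec ι C')
    (hsC : ∀ e, C e ≠ 0 → e ∈ T ∨ e = f) (hsC' : ∀ e, C' e ≠ 0 → e ∈ T ∨ e = f)
    (hCf : C f ≠ 0) (hCf' : C' f ≠ 0) :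
    ∀ e, C' e = (C f * C' f) * C e := by
  have hCf1 : C f = 1 ∨ C f = -1 := (hC.1 f).resolve_left hCf
  intro e
  by_cases hef : e = f
  · subst hef
    rcases hCf1 with hcc | hcc <;> rw [hcc] <;> ring
  · by_cases heT : e ∈ T
    · by_cases henl : (ι e).1 = (ι e).2
      · rw [no_loop_in_supp hTacyc hfnl C hC hsC e henl,
          no_loop_in_supp hTacyc hfnl C' hC' hsC' e henl]
        ring
      · rw [cut_eq heT hf henl hTacyc C hC.2.2.1 hsC,
          cut_eq heT hf henl hTacyc C' hC'.2.2.1 hsC']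
        rcases hCf1 with hcc | hcc <;> rw [hcc] <;> ring
    · have h1 : C e = 0 := by
        by_contra hc
        rcases hsC e hc with hcc | hcc
        · exact heT hcc
        · exact hef hcc
      have h2 : C' e = 0 := by
        by_contra hc
        rcases hsC' e hc with hcc | hcc
        · exact heT hcc
        · exact hef hcc
      rw [h1, h2]
      ring

/-- let `β, β'` be the edge ordering maps with data
`e₁ < e₂ < ⋯ < e_h` and `ē₁ < e₂ < ⋯ < e_h` (the first edge `e₁ = (v,u)` reversed).
For each non-tree edge `f`, `D f` (resp. `D' f`) is its fundamental cycle in `T + f`,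
oriented according to the smallest edge of the respective ordering it contains, and the
break divisor `β T` (resp. `β' T`) places a chip at the head of each non-tree edge.
Then `β T − β' T ≡ (u) − (v)` in `Pic⁰(G)`; explicitly it equals `(u) − (v)` if `e₁ ∉ T`,
and `(u) − (v) − Δχ_{U'}` if `e₁ ∈ T`, where `U'` is the component of `T − e₁`
containing `u`. -/
theorem edge_ordering_torsor_translation (ι : E → V × V) (h : ℕ) (hpos : 0 < h)
    (F : Finset E)
    (hF : ∀ C : E → ℤ, IsCycleVec ι C → ∃ e, C e ≠ 0 ∧ e ∉ F)
    (ord : Fin h → E) (hinj : Function.Injective ord)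
    (hrange : Set.range ord = {e | e ∉ F})
    (s s' : Fin h → ℤ)
    (hs : ∀ i, s i = 1 ∨ s i = -1)
    (hs0 : s ⟨0, hpos⟩ = 1)
    (hs'0 : s' ⟨0, hpos⟩ = -1)
    (hs'i : ∀ i : Fin h, (i : ℕ) ≠ 0 → s' i = s i)
    (e1 : E) (he1 : e1 = ord ⟨0, hpos⟩)
    (v u : V) (hvu : ι e1 = (v, u))
    (T : Finset E) (hTconn : Conn ι ↑T)
    (hTacyc : ∀ C : E → ℤ, IsCycleVec ι C → ∃ e, C e ≠ 0 ∧ e ∉ T)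
    (D D' : E → E → ℤ)
    (hD : ∀ f ∉ T, IsCycleVec ι (D f) ∧ (∀ e, D f e ≠ 0 → e ∈ T ∨ e = f) ∧ D f f ≠ 0 ∧
      (∀ i : Fin h, D f (ord i) ≠ 0 → (∀ j : Fin h, j < i → D f (ord j) = 0) →
        D f (ord i) = s i))
    (hD' : ∀ f ∉ T, IsCycleVec ι (D' f) ∧ (∀ e, D' f e ≠ 0 → e ∈ T ∨ e = f) ∧ D' f f ≠ 0 ∧
      (∀ i : Fin h, D' f (ord i) ≠ 0 → (∀ j : Fin h, j < i → D' f (ord j) = 0) →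
        D' f (ord i) = s' i))
    (β β' : V → ℤ)
    (hβ : ∀ w, β w = ∑ f ∈ Finset.univ.filter (· ∉ T),
        if D f f = 1 then (if (ι f).2 = w then 1 else 0) else (if (ι f).1 = w then 1 else 0))
    (hβ' : ∀ w, β' w = ∑ f ∈ Finset.univ.filter (· ∉ T),
        if D' f f = 1 then (if (ι f).2 = w then 1 else 0) else (if (ι f).1 = w then 1 else 0)) :
    (∃ x : V → ℤ, ∀ w, β w - β' w =
        ((if w = u then 1 else 0) - (if w = v then 1 else 0)) - lap ι x w) ∧
    (e1 ∉ T → ∀ w, β w - β' w =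
        (if w = u then 1 else 0) - (if w = v then 1 else 0)) ∧
    (e1 ∈ T → ∀ w, β w - β' w =
        ((if w = u then 1 else 0) - (if w = v then 1 else 0)) -
          lap ι (fun z => if ReachIn ι {g | g ∈ T ∧ g ≠ e1} u z then 1 else 0) w) := by
  classical
  have he1ord : ord ⟨0, hpos⟩ = e1 := he1.symm
  have hDpm : ∀ f, f ∉ T → D f f = 1 ∨ D f f = -1 :=
    fun f hf => (((hD f hf).1).1 f).resolve_left ((hD f hf).2.2.1)
  have hD'pm : ∀ f, f ∉ T → D' f f = 1 ∨ D' f f = -1 :=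
    fun f hf => (((hD' f hf).1).1 f).resolve_left ((hD' f hf).2.2.1)
  have hzero0 : ∀ (X : E → ℤ), ∀ j : Fin h, j < (⟨0, hpos⟩ : Fin h) → X (ord j) = 0 :=
    fun X j hj => ((Nat.not_lt_zero j.1 (Fin.lt_def.mp hj)).elim)
  -- the sign agreement lemma
  have sign_eq : ∀ f, f ∉ T → (ι f).1 ≠ (ι f).2 → D f e1 = 0 → D' f f = D f f := by
    intro f hfT hfnl h0
    have hk := prop_eq hfT hfnl hTacyc (D f) (D' f) (hD f hfT).1 (hD' f hfT).1
      (hD f hfT).2.1 (hD' f hfT).2.1 (hD f hfT).2.2.1 (hD' f hfT).2.2.1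
    have hex : ∃ m : ℕ, ∃ hm : m < h, D f (ord ⟨m, hm⟩) ≠ 0 := by
      obtain ⟨e, hce, heF⟩ := hF (D f) (hD f hfT).1
      have hmem : e ∈ Set.range ord := by rw [hrange]; exact heF
      obtain ⟨i, hi⟩ := hmem
      exact ⟨i.1, i.2, by rw [show (⟨i.1, i.2⟩ : Fin h) = i from rfl, hi]; exact hce⟩
    obtain ⟨hmh, hDm⟩ := Nat.find_spec hex
    set m := Nat.find hex with hm
    set i0 : Fin h := ⟨m, hmh⟩ with hi0
    have hmin : ∀ j : Fin h, j < i0 → D f (ord j) = 0 := by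
      intro j hj
      by_contra hc
      exact Nat.find_min hex (show j.1 < m from Fin.lt_def.mp hj)
        ⟨j.2, by rw [show (⟨j.1, j.2⟩ : Fin h) = j from rfl]; exact hc⟩
    have hs1 : D f (ord i0) = s i0 := (hD f hfT).2.2.2 i0 hDm hmin
    have hm0 : m ≠ 0 := by
      intro hc
      exact hDm (by rw [show i0 = (⟨0, hpos⟩ : Fin h) from Fin.ext hc, he1ord]; exact h0)
    have hmin' : ∀ j : Fin h, j < i0 → D' f (ord j) = 0 := by
      intro j hj; rw [hk (ord j), hmin j hj]; ring
    have hD'm : D' f (ord i0) ≠ 0 := by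
      rw [hk (ord i0), hs1]
      rcases hDpm f hfT with h1 | h1 <;> rcases hD'pm f hfT with h2 | h2 <;>
        rcases hs i0 with h3 | h3 <;> rw [h1, h2, h3] <;> norm_num
    have hs2 : D' f (ord i0) = s' i0 := (hD' f hfT).2.2.2 i0 hD'm hmin'
    have hs'eq : s' i0 = s i0 := hs'i i0 hm0
    have hkey : (D f f * D' f f) * s i0 = s i0 := by
      have hh := hk (ord i0)
      rw [hs1, hs2, hs'eq] at hh
      exact hh.symm
    rcases hDpm f hfT with h1 | h1 <;> rcases hD'pm f hfT with h2 | h2 <;>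
      rw [h1, h2] <;> rw [h1, h2] at hkey <;> rcases hs i0 with h3 | h3 <;>
      rw [h3] at hkey <;> first | rfl | norm_num at hkey
  set bt : E → V → ℤ := fun f w => if D f f = 1 then (if (ι f).2 = w then 1 else 0)
    else (if (ι f).1 = w then 1 else 0) with hbt
  set bt' : E → V → ℤ := fun f w => if D' f f = 1 then (if (ι f).2 = w then 1 else 0)
    else (if (ι f).1 = w then 1 else 0) with hbt'
  have hβs : ∀ w, β w - β' w = ∑ f ∈ Finset.univ.filter (· ∉ T), (bt f w - bt' f w) := by
    intro w
    rw [hβ w, hβ' w, ← Finset.sum_sub_distrib]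
  have hloopterm : ∀ f w, (ι f).1 = (ι f).2 → bt f w - bt' f w = 0 := by
    intro f w hl
    simp only [hbt, hbt', hl, ite_self, sub_self]
  have heqterm : ∀ f w, D' f f = D f f → bt f w - bt' f w = 0 := by
    intro f w heq
    simp only [hbt, hbt', heq, sub_self]
  -- part 2 : e1 ∉ T
  have part2 : e1 ∉ T → ∀ w, β w - β' w =
      (if w = u then 1 else 0) - (if w = v then 1 else 0) := by
    intro he1T w
    rw [hβs w]
    rw [Finset.sum_eq_single_of_mem e1 (by simp [he1T]) ?side]
    case side =>
      intro f hfmem hfe1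
      have hfT : f ∉ T := by simpa using hfmem
      by_cases hfl : (ι f).1 = (ι f).2
      · exact hloopterm f w hfl
      · have h0 : D f e1 = 0 := by
          by_contra hc
          rcases (hD f hfT).2.1 e1 hc with hh | hh
          · exact he1T hh
          · exact hfe1 hh.symm
        exact heqterm f w (sign_eq f hfT hfl h0)
    have hD1 : D e1 e1 = 1 := by
      have := (hD e1 he1T).2.2.2 ⟨0, hpos⟩
        (by rw [he1ord]; exact (hD e1 he1T).2.2.1) (hzero0 (D e1))
      rw [he1ord] at this
      rw [this, hs0]
    have hD'1 : D' e1 e1 = -1 := by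
      have := (hD' e1 he1T).2.2.2 ⟨0, hpos⟩
        (by rw [he1ord]; exact (hD' e1 he1T).2.2.1) (hzero0 (D' e1))
      rw [he1ord] at this
      rw [this, hs'0]
    simp only [hbt, hbt', hD1, hD'1, if_pos rfl]
    rw [if_neg (by norm_num : ¬ (-1 : ℤ) = 1), hvu]
    by_cases h1 : u = w <;> by_cases h2 : v = w <;>
      simp [h1, h2, eq_comm]
  -- part 3 : e1 ∈ T
  set χ : V → ℤ := fun z => if ReachIn ι {g | g ∈ T ∧ g ≠ e1} u z then 1 else 0 with hχ
  have hχchi : χ = chi ι T e1 := by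
    funext z
    simp only [hχ, chi, hvu]
  have hconv : (ι e1).1 = (ι e1).2 → ∀ z, ReachIn ι {g | g ∈ T ∧ g ≠ e1} u z := by
    intro hl z
    have huv : v = u := by rw [hvu] at hl; exact hl
    have hz := hTconn u z
    induction hz with
    | refl => exact Relation.ReflTransGen.refl
    | @tail b c hab hstep ih =>
      obtain ⟨e, heT, hor⟩ := hstep
      by_cases hee : e = e1
      · subst hee
        have hbc : b = c := by
          rw [hvu] at hor
          rcases hor with hh | hh <;> rw [Prod.mk.injEq] at hh
          · rw [← hh.1, ← hh.2]; exact huv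
          · rw [← hh.2, ← hh.1]; exact huv.symm
        exact hbc ▸ ih
      · exact Relation.ReflTransGen.tail ih ⟨e, ⟨heT, hee⟩, hor⟩
  have hχ1 : (ι e1).1 = (ι e1).2 → ∀ z, χ z = 1 := by
    intro hl z
    simp only [hχ]
    exact if_pos (hconv hl z)
  set L : E → V → ℤ := fun e w => (if (ι e).1 = w then χ (ι e).1 - χ (ι e).2 else 0) +
      (if (ι e).2 = w then χ (ι e).2 - χ (ι e).1 else 0) with hL
  have hflip : ∀ (a b : V), (if a = b then (1:ℤ) else 0) = (if b = a then 1 else 0) := by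
    intro a b
    by_cases hc : a = b
    · rw [if_pos hc, if_pos hc.symm]
    · rw [if_neg hc, if_neg (fun hh => hc hh.symm)]
  have part3 : e1 ∈ T → ∀ w, β w - β' w =
      ((if w = u then 1 else 0) - (if w = v then 1 else 0)) - lap ι χ w := by
    intro he1T w
    have perf : ∀ f, f ∉ T → bt f w - bt' f w = - L f w := by
      intro f hfT
      by_cases hfl : (ι f).1 = (ι f).2
      · rw [hloopterm f w hfl]
        simp [hL, hfl]
      · by_cases he1l : (ι e1).1 = (ι e1).2
        · have h0 : D f e1 = 0 :=
            no_loop_in_supp hTacyc hfl (D f) (hD f hfT).1 (hD f hfT).2.1 e1 he1l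
          rw [heqterm f w (sign_eq f hfT hfl h0)]
          simp [hL, hχ1 he1l]
        · have hcutD := cut_eq he1T hfT he1l hTacyc (D f) ((hD f hfT).1).2.2.1 (hD f hfT).2.1
          have hcutD' := cut_eq he1T hfT he1l hTacyc (D' f) ((hD' f hfT).1).2.2.1 (hD' f hfT).2.1
          rw [← hχchi] at hcutD hcutD'
          by_cases hdz : χ (ι f).2 - χ (ι f).1 = 0
          · have h0 : D f e1 = 0 := by rw [hcutD, hdz]; ring
            rw [heqterm f w (sign_eq f hfT hfl h0)]
            have hpq : χ (ι f).2 = χ (ι f).1 := by linarith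
            simp [hL, hpq]
          · have a1 : χ (ι f).1 = 0 ∨ χ (ι f).1 = 1 := by
              rw [hχchi]; exact chi01 ι T e1 _
            have a2 : χ (ι f).2 = 0 ∨ χ (ι f).2 = 1 := by
              rw [hχchi]; exact chi01 ι T e1 _
            have hd1 : χ (ι f).2 - χ (ι f).1 = 1 ∨ χ (ι f).2 - χ (ι f).1 = -1 := by
              rcases a1 with p | p <;> rcases a2 with q | q
              · exact absurd (by rw [p, q]; norm_num) hdz
              · left; rw [p, q]; norm_num
              · right; rw [p, q]; norm_num
              · exact absurd (by rw [p, q]; norm_num) hdz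
            have hDe1 : D f e1 = 1 := by
              have hne : D f (ord ⟨0, hpos⟩) ≠ 0 := by
                rw [he1ord, hcutD]
                rcases hDpm f hfT with p | p <;> rcases hd1 with q | q <;> rw [p, q] <;> norm_num
              have hh := (hD f hfT).2.2.2 ⟨0, hpos⟩ hne (hzero0 (D f))
              rw [he1ord] at hh
              rw [hh, hs0]
            have hD'e1 : D' f e1 = -1 := by
              have hne : D' f (ord ⟨0, hpos⟩) ≠ 0 := by
                rw [he1ord, hcutD']
                rcases hD'pm f hfT with p | p <;> rcases hd1 with q | q <;> rw [p, q] <;> norm_num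
              have hh := (hD' f hfT).2.2.2 ⟨0, hpos⟩ hne (hzero0 (D' f))
              rw [he1ord] at hh
              rw [hh, hs'0]
            rw [hcutD] at hDe1
            rw [hcutD'] at hD'e1
            rcases hd1 with q | q
            · have hε : D f f = -1 := by
                rcases hDpm f hfT with p | p
                · rw [p, q] at hDe1; norm_num at hDe1
                · exact p
              have hε' : D' f f = 1 := by
                rcases hD'pm f hfT with p | p
                · exact p
                · rw [p, q] at hD'e1; norm_num at hD'e1
              have p1 : χ (ι f).1 = 0 := by omega
              have p2 : χ (ι f).2 = 1 := by omega
              simp only [hbt, hbt', hε, hε', hL, p1, p2]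
              by_cases h1 : (ι f).1 = w <;> by_cases h2 : (ι f).2 = w <;>
                simp [h1, h2]
            · have hε : D f f = 1 := by
                rcases hDpm f hfT with p | p
                · exact p
                · rw [p, q] at hDe1; norm_num at hDe1
              have hε' : D' f f = -1 := by
                rcases hD'pm f hfT with p | p
                · rw [p, q] at hD'e1; norm_num at hD'e1
                · exact p
              have p1 : χ (ι f).1 = 1 := by omega
              have p2 : χ (ι f).2 = 0 := by omega
              simp only [hbt, hbt', hε, hε', hL, p1, p2]
              by_cases h1 : (ι f).1 = w <;> by_cases h2 : (ι f).2 = w <;>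
                simp [h1, h2]
    have hlapsplit : lap ι χ w = (∑ e ∈ Finset.univ.filter (· ∈ T), L e w) +
        ∑ e ∈ Finset.univ.filter (· ∉ T), L e w := by
      have hh : lap ι χ w = ∑ e : E, L e w := by
        simp only [lap, hL]
      rw [hh]
      exact (Finset.sum_filter_add_sum_filter_not _ _ _).symm
    have hTsum : ∑ e ∈ Finset.univ.filter (· ∈ T), L e w = L e1 w := by
      refine Finset.sum_eq_single_of_mem e1 (by simp [he1T]) (fun b hb hbe => ?_)
      have hbT : b ∈ T := by simpa using hb
      have hχb : χ (ι b).1 = χ (ι b).2 := by rw [hχchi]; exact chi_edge hbT hbe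
      simp [hL, hχb]
    have hLe1 : L e1 w = (if w = u then 1 else 0) - (if w = v then 1 else 0) := by
      rw [hflip w u, hflip w v]
      by_cases he1l : (ι e1).1 = (ι e1).2
      · have huv : u = v := by rw [hvu] at he1l; exact he1l.symm
        simp [hL, hχ1 he1l, huv]
      · have hχv : χ v = 0 := by
          have hh := chi_tail he1T he1l hTacyc
          rw [← hχchi, hvu] at hh
          exact hh
        have hχu2 : χ u = 1 := by
          have hh := chi_head ι T e1
          rw [← hχchi, hvu] at hh
          exact hh
        have hLv : L e1 w = (if v = w then χ v - χ u else 0) +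
            (if u = w then χ u - χ v else 0) := by
          simp only [hL, hvu]
        rw [hLv, hχv, hχu2]
        by_cases h1 : v = w <;> by_cases h2 : u = w <;> simp [h1, h2]
    rw [hβs w, hlapsplit, hTsum, hLe1]
    rw [Finset.sum_congr rfl (fun f hf => perf f (by simpa using hf))]
    rw [Finset.sum_neg_distrib]
    ring
  refine ⟨?_, part2, part3⟩
  by_cases he1T : e1 ∈ T
  · exact ⟨χ, part3 he1T⟩
  · refine ⟨fun _ => (0:ℤ), fun w => ?_⟩
    rw [part2 he1T w]
    have hl0 : lap ι (fun _ => (0:ℤ)) w = 0 := by simp [lap]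
    rw [hl0]
    ring
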